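/- If the regression function is additive, m(X) = Σ_k m_k(X^{(k)}), then E[(m(X) - m(X_{π_j}))^2] = 2·Var(m_j(X^{(j)})). -/

import Mathlib

open MeasureTheory ProbabilityTheory
open scoped ENNReal NNReal

noncomputable section

/-- `X_{π_j}` : the vector `X` with its `j`-th component replaced by `X'`. -/
def permuted {Ω : Type*} {p : ℕ} (X : Ω → Fin p → ℝ) (j : Fin p) (X' : Ω → ℝ) :
    Ω → Fin p → ℝ :=
  fun ω => Function.update (X ω) j (X' ω)

/-- If the regression function is additive, `m(x) = ∑ₖ mₖ(x⁽ᵏ⁾)`, then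
`E[(m(X) - m(X_{π_j}))²] = 2 Var(m_j(X^{(j)}))`. -/
theorem mda_limit_additive
    {Ω : Type*} [MeasureSpace Ω] [IsProbabilityMeasure (ℙ : Measure Ω)]
    {p : ℕ} (j : Fin p) (X : Ω → Fin p → ℝ) (X' : Ω → ℝ)
    (mk : Fin p → ℝ → ℝ) (hmk : ∀ k, Measurable (mk k))
    (hL2 : ∀ k, MemLp (fun ω => mk k (X ω k)) 2 ℙ)
    (hX : Measurable X) (hX' : Measurable X')
    -- `X'` is an independent copy of the `j`-th component of `X`
    (hcopy : Measure.map X' ℙ = Measure.map (fun ω => X ω j) ℙ)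
    (hindep : IndepFun X' X ℙ) :
    ∫ ω, ((∑ k, mk k (X ω k)) - (∑ k, mk k (permuted X j X' ω k))) ^ 2 ∂ℙ
      = 2 * variance (fun ω => mk j (X ω j)) ℙ := by
  set A : Ω → ℝ := fun ω => mk j (X ω j) with hA
  set B : Ω → ℝ := fun ω => mk j (X' ω) with hB
  have hXjmeas : Measurable fun ω => X ω j := (measurable_pi_apply j).comp hX
  have hA2 : MemLp A 2 ℙ := hL2 j
  have hB2 : MemLp B 2 ℙ := by
    have h : MemLp (mk j) 2 (Measure.map X' ℙ) := by
      rw [hcopy]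
      exact (memLp_map_measure_iff (hmk j).aestronglyMeasurable
        hXjmeas.aemeasurable).mpr (hL2 j)
    exact (memLp_map_measure_iff (hmk j).aestronglyMeasurable hX'.aemeasurable).mp h
  have hEB : ∫ ω, B ω ∂ℙ = ∫ ω, A ω ∂ℙ := by
    calc ∫ ω, B ω ∂ℙ = ∫ x, mk j x ∂(Measure.map X' ℙ) :=
          (integral_map hX'.aemeasurable (hmk j).aestronglyMeasurable).symm
      _ = ∫ x, mk j x ∂(Measure.map (fun ω => X ω j) ℙ) := by rw [hcopy]
      _ = ∫ ω, A ω ∂ℙ :=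
          integral_map hXjmeas.aemeasurable (hmk j).aestronglyMeasurable
  have hEB2 : ∫ ω, B ω ^ 2 ∂ℙ = ∫ ω, A ω ^ 2 ∂ℙ := by
    calc ∫ ω, B ω ^ 2 ∂ℙ = ∫ x, mk j x ^ 2 ∂(Measure.map X' ℙ) :=
          (integral_map hX'.aemeasurable
            ((hmk j).pow_const 2).aestronglyMeasurable).symm
      _ = ∫ x, mk j x ^ 2 ∂(Measure.map (fun ω => X ω j) ℙ) := by rw [hcopy]
      _ = ∫ ω, A ω ^ 2 ∂ℙ :=
          integral_map hXjmeas.aemeasurable ((hmk j).pow_const 2).aestronglyMeasurable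
  have hindepAB : IndepFun A B ℙ :=
    (hindep.comp (hmk j) ((hmk j).comp (measurable_pi_apply j))).symm
  have hAint : Integrable A ℙ := hA2.integrable one_le_two
  have hBint : Integrable B ℙ := hB2.integrable one_le_two
  have hEAB : ∫ ω, A ω * B ω ∂ℙ = (∫ ω, A ω ∂ℙ) * (∫ ω, B ω ∂ℙ) :=
    hindepAB.integral_mul_eq_mul_integral hAint.1 hBint.1
  have hABint : Integrable (fun ω => A ω * B ω) ℙ := hindepAB.integrable_mul hAint hBint
  have hptw : ∀ ω, ((∑ k, mk k (X ω k)) - (∑ k, mk k (permuted X j X' ω k)))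
      = A ω - B ω := by
    intro ω
    rw [← Finset.sum_sub_distrib]
    rw [Finset.sum_eq_single j]
    · simp [permuted, Function.update_self, hA, hB]
    · intro k _ hk
      simp [permuted, Function.update_of_ne hk]
    · simp
  have hrw : (fun ω => ((∑ k, mk k (X ω k)) - (∑ k, mk k (permuted X j X' ω k))) ^ 2)
      = fun ω => A ω ^ 2 - 2 * (A ω * B ω) + B ω ^ 2 := by
    funext ω; rw [hptw ω]; ring
  rw [show ∫ ω, ((∑ k, mk k (X ω k)) - (∑ k, mk k (permuted X j X' ω k))) ^ 2 ∂ℙ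
      = ∫ ω, (A ω ^ 2 - 2 * (A ω * B ω) + B ω ^ 2) ∂ℙ from by rw [hrw]]
  rw [integral_add (by exact (hA2.integrable_sq).sub (hABint.const_mul 2)) hB2.integrable_sq,
    integral_sub hA2.integrable_sq (hABint.const_mul 2), integral_const_mul, hEAB, hEB, hEB2]
  rw [variance_eq_sub hA2]
  have : ℙ[A ^ 2] = ∫ ω, A ω ^ 2 ∂ℙ := by simp [Pi.pow_apply]
  rw [this]
  ring
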